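/- For the VarQITE gradient error e = ψ̇ + i Im(⟨ψ̇|ψ⟩)ψ − (E − H')ψ (with ψ a unit vector, E = ⟨ψ,H'ψ⟩, Re⟨ψ|ψ̇⟩ = 0), its squared norm equals Var(H')_ψ + ⟨ψ̇|ψ̇⟩ − ⟨ψ̇|ψ⟩⟨ψ|ψ̇⟩ + 2 Re⟨ψ̇, H'ψ⟩. -/

import Mathlib

open scoped ComplexInnerProductSpace

/-- Squared norm of the VarQITE gradient error
e = ψ̇ + i Im(⟨ψ̇|ψ⟩)ψ − (E − H')ψ equals
Var(H')_ψ + ⟨ψ̇|ψ̇⟩ − ⟨ψ̇|ψ⟩⟨ψ|ψ̇⟩ + 2 Re⟨ψ̇, H'ψ⟩. -/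
theorem varqite_gradient_error_norm
    {H : Type*} [NormedAddCommGroup H] [InnerProductSpace ℂ H] [CompleteSpace H]
    (H' : H →L[ℂ] H) (hH : IsSelfAdjoint H')
    (ψ ψdot : H) (hψ : ‖ψ‖ = 1) (htang : (⟪ψ, ψdot⟫).re = 0)
    (E Var : ℝ) (hE : E = (⟪ψ, H' ψ⟫).re)
    (hVar : Var = (⟪ψ, H' (H' ψ)⟫).re - E ^ 2)
    (e : H)
    (he : e = ψdot + (Complex.I * (⟪ψdot, ψ⟫).im) • ψ
        - ((E : ℂ) • ψ - H' ψ)) :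
    ‖e‖ ^ 2 = Var + (⟪ψdot, ψdot⟫ - ⟪ψdot, ψ⟫ * ⟪ψ, ψdot⟫).re
        + 2 * (⟪ψdot, H' ψ⟫).re := by
  have hadj : ∀ x y : H, ⟪H' x, y⟫ = ⟪x, H' y⟫ := fun x y => by
    rw [← ContinuousLinearMap.adjoint_inner_left, hH.adjoint_eq]
  have hψψ : ⟪ψ, ψ⟫ = 1 := by
    rw [inner_self_eq_norm_sq_to_K, hψ]; norm_num
  have hconj : ⟪ψdot, ψ⟫ = (starRingEnd ℂ) ⟪ψ, ψdot⟫ := (inner_conj_symm _ _).symm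
  -- names
  set a := ⟪ψ, ψdot⟫ with ha
  set b := ⟪ψdot, H' ψ⟫ with hb
  have hba : ⟪H' ψ, ψdot⟫ = (starRingEnd ℂ) b := by rw [hb, inner_conj_symm]
  have hψHψdot : ⟪ψ, H' ψdot⟫ = (starRingEnd ℂ) b := by rw [← hadj, hba]
  have hc : ⟪ψ, H' ψ⟫ = (E : ℂ) := by
    have hreal : (starRingEnd ℂ) ⟪ψ, H' ψ⟫ = ⟪ψ, H' ψ⟫ := by
      rw [inner_conj_symm, hadj]
    have him : (⟪ψ, H' ψ⟫).im = 0 := by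
      have h2 : -(⟪ψ, H' ψ⟫).im = (⟪ψ, H' ψ⟫).im := by
        rw [← Complex.conj_im, hreal]
      linarith
    apply Complex.ext <;> simp [hE, him]
  have hcr : ⟪H' ψ, ψ⟫ = (E : ℂ) := by rw [hadj, hc]
  have hf : ⟪H' ψ, H' ψ⟫ = ⟪ψ, H' (H' ψ)⟫ := hadj _ _
  -- e rewritten
  have hcoef : (Complex.I * (⟪ψdot, ψ⟫).im : ℂ) = (starRingEnd ℂ) a := by
    rw [hconj]
    apply Complex.ext <;> simp [htang]
  rw [hcoef] at he
  have key : ‖e‖ ^ 2 = (⟪e, e⟫).re := by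
    rw [@InnerProductSpace.norm_sq_eq_re_inner ℂ]; rfl
  rw [key, he]
  simp only [inner_sub_left, inner_sub_right, inner_add_left, inner_add_right,
    inner_smul_left, inner_smul_right, hψψ, hba, hψHψdot, hc, hcr, hf, ← ha, ← hb,
    ← hconj, mul_one]
  have him : a.im = -(⟪ψdot, ψ⟫).im := by rw [hconj]; simp
  have hre : (⟪ψdot, ψ⟫ * a).re = (⟪ψdot, ψ⟫).im ^ 2 := by
    rw [hconj]
    simp [Complex.mul_re, htang]
    ring
  simp only [Complex.sub_re, Complex.add_re, Complex.mul_re, Complex.conj_re,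
    Complex.conj_im, Complex.ofReal_re, Complex.ofReal_im, Complex.mul_im,
    Complex.sub_im, Complex.add_im]
  rw [hconj] at *
  simp [htang] at *
  ring_nf
  nlinarith [hVar, hre]
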